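/- Let b_u, b_v, b_w be i.i.d. Bernoulli(p) with p ∈ (0,1). With the choice α = 1/p and β = (2p−1)/p², the kernel K_A = α(b_u(1−b_v) + b_v(1−b_u)) + β b_u b_v satisfies E[K_A] = 1 and Cov(K_A, K_{A'}) = 0, where K_{A'} is the analogous kernel on the edge {v,w}. -/

import Mathlib

/-- Weight of a Bernoulli(p) outcome: `p` for sampled, `q = 1 - p` otherwise. -/
def bwt (p : ℝ) (b : Bool) : ℝ := if b then p else 1 - p

/-- Real indicator of a Boolean. -/
def ind (b : Bool) : ℝ := if b then 1 else 0

/-- Expectation of a function of three i.i.d. Bernoulli(p) variables. -/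
def E3 (p : ℝ) (f : Bool → Bool → Bool → ℝ) : ℝ :=
  ∑ bu : Bool, ∑ bv : Bool, ∑ bw : Bool,
    bwt p bu * bwt p bv * bwt p bw * f bu bv bw

/-- The edge kernel `K` of the two-parameter linear estimator. -/
def K (α β : ℝ) (a b : Bool) : ℝ :=
  α * (ind a * (1 - ind b) + ind b * (1 - ind a)) + β * (ind a * ind b)

/-- With `α = 1/p` and `β = (2p − 1)/p²`, the edge kernel is unbiased and
the covariance of the kernels on two edges sharing exactly one vertex
vanishes. -/
theorem stmt_6 (p : ℝ) (hp0 : 0 < p) (hp1 : p < 1) :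
    (E3 p fun bu bv _ => K (1 / p) ((2 * p - 1) / p ^ 2) bu bv) = 1
    ∧ (E3 p fun bu bv bw =>
          K (1 / p) ((2 * p - 1) / p ^ 2) bu bv
            * K (1 / p) ((2 * p - 1) / p ^ 2) bv bw)
        - (E3 p fun bu bv _ => K (1 / p) ((2 * p - 1) / p ^ 2) bu bv)
          * (E3 p fun _ bv bw => K (1 / p) ((2 * p - 1) / p ^ 2) bv bw)
      = 0 := by
  have hp : p ≠ 0 := ne_of_gt hp0
  constructor <;>
  · simp only [E3, K, bwt, ind, Fintype.sum_bool, Bool.false_eq_true, ↓reduceIte]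
    field_simp
    ring
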